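/- Let u_1,…,u_n ∈ ℤ^n, q ∈ ℤ^n, a ∈ ℝ^n, κ_1,…,κ_n ∈ ℝ, L_i(ξ) = ⟨u_i,ξ⟩ − κ_i, and G^λ(ξ) = ∑_{i=1}^n L_i(ξ) log L_i(ξ). Set I⁺ = {i : ⟨u_i,q⟩ ≥ 0} and I⁻ = {i : ⟨u_i,q⟩ ≤ 0}. Then for every ξ with L_i(ξ) > 0 for all i, one has ⟨∇G^λ(ξ), q⟩ = log( ∏_{i=1}^n (e·L_i(ξ))^{⟨u_i,q⟩} ), and consequently ⟨∇G^λ(ξ) − a, q⟩ = 0 if and only if ∏_{i∈I⁺} (e·L_i(ξ))^{⟨u_i,q⟩} − e^{⟨a,q⟩} ∏_{i∈I⁻} (e·L_i(ξ))^{−⟨u_i,q⟩} = 0. -/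

import Mathlib

open Finset

/-- On the positivity region of the local model,
`⟨∇G^λ(ξ), q⟩ = log (∏ i, (e * L i ξ) ^ ⟨u i, q⟩)`, and consequently
`⟨∇G^λ(ξ) − a, q⟩ = 0` iff
`∏_{i ∈ I⁺} (e L i ξ)^{⟨u i,q⟩} − e^{⟨a,q⟩} ∏_{i ∈ I⁻} (e L i ξ)^{−⟨u i,q⟩} = 0`. -/
theorem stmt12 (n : ℕ) (u : Fin n → Fin n → ℤ) (q : Fin n → ℤ)
    (a : Fin n → ℝ) (κ : Fin n → ℝ)
    (L : Fin n → (Fin n → ℝ) → ℝ)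
    (hL : ∀ i ξ, L i ξ = ∑ m, (u i m : ℝ) * ξ m - κ i) :
    ∀ ξ : Fin n → ℝ, (∀ i, 0 < L i ξ) →
      ((∑ m, (∑ i, (1 + Real.log (L i ξ)) * (u i m : ℝ)) * (q m : ℝ)
          = Real.log (∏ i, (Real.exp 1 * L i ξ) ^ (∑ m, u i m * q m))) ∧
       ((∑ m, ((∑ i, (1 + Real.log (L i ξ)) * (u i m : ℝ)) - a m) * (q m : ℝ) = 0 ↔
         (∏ i ∈ univ.filter fun i => 0 ≤ ∑ m, u i m * q m,
            (Real.exp 1 * L i ξ) ^ (∑ m, u i m * q m).toNat)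
         - Real.exp (∑ m, a m * (q m : ℝ)) *
           ∏ i ∈ univ.filter fun i => (∑ m, u i m * q m) ≤ 0,
             (Real.exp 1 * L i ξ) ^ (-∑ m, u i m * q m).toNat
         = 0))) := by
  intro ξ hpos
  set x : Fin n → ℝ := fun i => Real.exp 1 * L i ξ with hxdef
  have hx : ∀ i, 0 < x i := fun i => mul_pos (Real.exp_pos 1) (hpos i)
  set c : Fin n → ℤ := fun i => ∑ m, u i m * q m with hcdef
  have hlogx : ∀ i, Real.log (x i) = 1 + Real.log (L i ξ) := by
    intro i
    rw [hxdef, Real.log_mul (Real.exp_ne_zero 1) (hpos i).ne', Real.log_exp]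
  -- first part
  have h1 : ∑ m, (∑ i, (1 + Real.log (L i ξ)) * (u i m : ℝ)) * (q m : ℝ)
      = ∑ i, (c i : ℝ) * (1 + Real.log (L i ξ)) := by
    simp_rw [Finset.sum_mul, mul_assoc]
    rw [Finset.sum_comm]
    refine Finset.sum_congr rfl fun i _ => ?_
    rw [← Finset.mul_sum, hcdef]
    push_cast
    ring
  have hPrpos : ∀ i ∈ (univ : Finset (Fin n)), x i ^ (c i) ≠ 0 :=
    fun i _ => (zpow_pos (hx i) _).ne'
  have hlogprod : Real.log (∏ i, x i ^ (c i))
      = ∑ i, (c i : ℝ) * (1 + Real.log (L i ξ)) := by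
    rw [Real.log_prod hPrpos]
    refine Finset.sum_congr rfl fun i _ => ?_
    rw [Real.log_zpow, hlogx]
  have hfirst : ∑ m, (∑ i, (1 + Real.log (L i ξ)) * (u i m : ℝ)) * (q m : ℝ)
      = Real.log (∏ i, x i ^ (c i)) := by rw [h1, hlogprod]
  refine ⟨hfirst, ?_⟩
  -- second part
  have hsplit : ∑ m, ((∑ i, (1 + Real.log (L i ξ)) * (u i m : ℝ)) - a m) * (q m : ℝ)
      = (∑ m, (∑ i, (1 + Real.log (L i ξ)) * (u i m : ℝ)) * (q m : ℝ))
        - ∑ m, a m * (q m : ℝ) := by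
    rw [← Finset.sum_sub_distrib]
    refine Finset.sum_congr rfl fun m _ => ?_
    ring
  have hPr : 0 < ∏ i, x i ^ (c i) := Finset.prod_pos fun i _ => zpow_pos (hx i) _
  -- extend filtered products to univ
  have hPplus : (∏ i ∈ univ.filter fun i => 0 ≤ c i, x i ^ (c i).toNat)
      = ∏ i, x i ^ (c i).toNat := by
    refine Finset.prod_subset (Finset.filter_subset _ _) fun i _ hi => ?_
    simp only [Finset.mem_filter, Finset.mem_univ, true_and, not_le] at hi
    rw [Int.toNat_of_nonpos hi.le, pow_zero]
  have hPminus : (∏ i ∈ univ.filter fun i => c i ≤ 0, x i ^ (-c i).toNat)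
      = ∏ i, x i ^ (-c i).toNat := by
    refine Finset.prod_subset (Finset.filter_subset _ _) fun i _ hi => ?_
    simp only [Finset.mem_filter, Finset.mem_univ, true_and, not_le] at hi
    rw [Int.toNat_of_nonpos (by omega), pow_zero]
  have hPminuspos : 0 < ∏ i, x i ^ (-c i).toNat :=
    Finset.prod_pos fun i _ => pow_pos (hx i) _
  have hkey : (∏ i, x i ^ (c i)) * (∏ i, x i ^ (-c i).toNat)
      = ∏ i, x i ^ (c i).toNat := by
    rw [← Finset.prod_mul_distrib]
    refine Finset.prod_congr rfl fun i _ => ?_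
    rcases le_or_gt 0 (c i) with h | h
    · rw [Int.toNat_of_nonpos (by omega), pow_zero, mul_one,
        ← zpow_natCast (x i) (c i).toNat, Int.toNat_of_nonneg h]
    · rw [Int.toNat_of_nonpos h.le, pow_zero,
        ← zpow_natCast (x i) (-c i).toNat, Int.toNat_of_nonneg (by omega),
        ← zpow_add₀ (hx i).ne', add_neg_cancel, zpow_zero]
  set A : ℝ := ∑ m, a m * (q m : ℝ) with hAdef
  rw [hsplit, hfirst, sub_eq_zero]
  constructor
  · intro h
    have hPreq : ∏ i, x i ^ (c i) = Real.exp A := by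
      rw [← h, Real.exp_log hPr]
    rw [hPplus, hPminus, sub_eq_zero, ← hkey, hPreq]
  · intro h
    rw [hPplus, hPminus, sub_eq_zero, ← hkey] at h
    have hPreq : ∏ i, x i ^ (c i) = Real.exp A :=
      mul_right_cancel₀ hPminuspos.ne' (by linarith [h])
    rw [hPreq, Real.log_exp]
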